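/- Let G be a connected graph with at least 3 vertices, and let c be a locally-optimal coloring of G. Then every color used by c is assigned to at least three vertices. -/
import Mathlib


/-- A locally-optimal `k`-coloring: each vertex's own color appears strictly
more often among its neighbors than any other color (plurality). -/
def IsLocOpt {V : Type*} {k : ℕ} (G : SimpleGraph V) (c : V → Fin k) : Prop :=
  ∀ v : V, ∀ d : Fin k, d ≠ c v →
    Nat.card {w : V // G.Adj v w ∧ c w = d} < Nat.card {w : V // G.Adj v w ∧ c w = c v}

/-- The number of locally-optimal `k`-colorings of `G`. -/
noncomputable def LOcount {V : Type*} (G : SimpleGraph V) (k : ℕ) : ℕ :=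
  Nat.card {c : V → Fin k // IsLocOpt G c}

/-- In a connected graph with at least 3 vertices, every color used by a
locally-optimal coloring is assigned to at least three vertices. -/
theorem stmt3 {V : Type*} [Fintype V] (G : SimpleGraph V) {k : ℕ}
    (hconn : G.Connected) (hn : 3 ≤ Fintype.card V)
    (c : V → Fin k) (hc : IsLocOpt G c) (i : Fin k) (v : V) (hv : c v = i) :
    3 ≤ Nat.card {u : V // c u = i} := by
  classical
  have hc' : ∀ x : V, ∀ d : Fin k, d ≠ c x →
      ({w : V | G.Adj x w ∧ c w = d}).ncard < ({w : V | G.Adj x w ∧ c w = c x}).ncard := hc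
  show 3 ≤ ({u : V | c u = i}).ncard
  -- every vertex has a neighbor
  have ex_nbr : ∀ x : V, ∃ y, G.Adj x y := by
    intro x
    obtain ⟨y, hy⟩ := Fintype.exists_ne_of_one_lt_card (by omega) x
    obtain ⟨p⟩ := hconn x y
    cases p with
    | nil => exact absurd rfl hy
    | cons h q => exact ⟨_, h⟩
  -- every vertex has a same-colored neighbor
  have same_nbr : ∀ x : V, ∃ y, G.Adj x y ∧ c y = c x := by
    intro x
    obtain ⟨y, hxy⟩ := ex_nbr x
    by_cases h : c y = c x
    · exact ⟨y, hxy, h⟩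
    · have hlt := hc' x (c y) h
      have h1 : 0 < ({w : V | G.Adj x w ∧ c w = c x}).ncard := lt_of_le_of_lt (Nat.zero_le _) hlt
      obtain ⟨z, hz⟩ := (Set.ncard_pos (Set.toFinite _)).mp h1
      exact ⟨z, hz.1, hz.2⟩
  -- given a vertex of color i with at least two same-colored neighbors, done
  have done_of_two : ∀ x : V, c x = i →
      1 < ({w : V | G.Adj x w ∧ c w = i}).ncard → 3 ≤ ({u : V | c u = i}).ncard := by
    intro x hx h2
    obtain ⟨a, b, ha, hb, hab⟩ := (Set.one_lt_ncard_iff (Set.toFinite _)).mp h2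
    have hxa : x ≠ a := fun h => G.irrefl (h ▸ ha.1)
    have hxb : x ≠ b := fun h => G.irrefl (h ▸ hb.1)
    have hsub : ({x, a, b} : Set V) ⊆ {u : V | c u = i} := by
      rintro z (rfl | rfl | rfl)
      · exact hx
      · exact ha.2
      · exact hb.2
    have h3 : ({x, a, b} : Set V).ncard = 3 :=
      Set.ncard_eq_three.mpr ⟨x, a, b, hxa, hxb, hab, rfl⟩
    calc 3 = ({x, a, b} : Set V).ncard := h3.symm
      _ ≤ _ := Set.ncard_le_ncard hsub (Set.toFinite _)
  -- if a vertex of color i has exactly one same-colored neighbor w, then w is its only neighbor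
  have only_nbr : ∀ x y : V, c x = i → G.Adj x y → c y = i →
      ({w : V | G.Adj x w ∧ c w = i}).ncard ≤ 1 → ∀ z, G.Adj x z → z = y := by
    intro x y hx hxy hy hle z hz
    by_cases hcz : c z = i
    · -- the set has ncard 1 and contains both y and z
      have hy' : y ∈ {w : V | G.Adj x w ∧ c w = i} := ⟨hxy, hy⟩
      have hz' : z ∈ {w : V | G.Adj x w ∧ c w = i} := ⟨hz, hcz⟩
      have h1 : ({w : V | G.Adj x w ∧ c w = i}).ncard = 1 := by
        have hpos : 0 < ({w : V | G.Adj x w ∧ c w = i}).ncard :=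
          (Set.ncard_pos (Set.toFinite _)).mpr ⟨y, hy'⟩
        omega
      obtain ⟨a, hau⟩ := Set.ncard_eq_one.mp h1
      rw [hau] at hy' hz'
      rw [hz', hy']
    · exfalso
      have hlt := hc' x (c z) (by rw [hx]; exact fun h => hcz h)
      rw [hx] at hlt
      have : 0 < ({w : V | G.Adj x w ∧ c w = c z}).ncard :=
        (Set.ncard_pos (Set.toFinite _)).mpr ⟨z, hz, rfl⟩
      omega
  obtain ⟨w, hvw, hcw⟩ := same_nbr v
  have hcwi : c w = i := hcw.trans hv
  rcases lt_or_ge 1 (({w : V | G.Adj v w ∧ c w = i}).ncard) with h2 | h1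
  · exact done_of_two v hv h2
  · -- w is v's only neighbor
    have nbrv : ∀ z, G.Adj v z → z = w := only_nbr v w hv hvw hcwi h1
    rcases lt_or_ge 1 (({u : V | G.Adj w u ∧ c u = i}).ncard) with h2' | h1'
    · exact done_of_two w hcwi h2'
    · have nbrw : ∀ z, G.Adj w z → z = v := only_nbr w v hcwi hvw.symm hv h1'
      -- contradiction: the component of v would be {v, w}
      exfalso
      have hvw' : v ≠ w := G.ne_of_adj hvw
      -- find a third vertex
      have hex : ∃ x : V, x ≠ v ∧ x ≠ w := by
        by_contra h
        push_neg at h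
        have hsub : (Finset.univ : Finset V) ⊆ {v, w} := by
          intro x _
          by_cases hx : x = v
          · simp [hx]
          · simp [h x hx]
        have := Finset.card_le_card hsub
        rw [Finset.card_univ] at this
        have h2 : ({v, w} : Finset V).card ≤ 2 :=
          le_trans (Finset.card_insert_le _ _) (by simp)
        omega
      have step : ∀ y z : V, (y = v ∨ y = w) → G.Adj y z → (z = v ∨ z = w) := by
        rintro y z (rfl | rfl) hadj
        · exact Or.inr (nbrv z hadj)
        · exact Or.inl (nbrw z hadj)
      have key : ∀ (x y : V) (p : G.Walk y x), (y = v ∨ y = w) → (x = v ∨ x = w) := by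
        intro x y p
        induction p with
        | nil => exact fun h => h
        | cons h q ih => exact fun hy => ih (step _ _ hy h)
      obtain ⟨x, hxv, hxw⟩ := hex
      obtain ⟨p⟩ := hconn v x
      rcases key x v p (Or.inl rfl) with h | h
      · exact hxv h
      · exact hxw h
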